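/- Let g be a finite-dimensional complex Lie algebra with a nondegenerate symmetric invariant bilinear form ⟨·,·⟩, let X¹,…,X^d and X₁,…,X_d be bases of g dual with respect to this form, and let π : g → End V be a finite-dimensional representation. Then in End V ⊗ End V ⊗ U(g) the identity G₁G₂ − G₂G₁ = −Ω G₂ + G₂ Ω holds, and equivalently G₁G₂ − G₂G₁ = Ω G₁ − G₁ Ω. Moreover, if π is faithful, these matrix relations are equivalent to the defining commutation relations [X_i,X_j] = Σ_k c_{ij}^k X_k of U(g). -/

import Mathlib

noncomputable section

set_option maxHeartbeats 1000000
set_option synthInstance.maxHeartbeats 1000000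

open scoped TensorProduct

attribute [local instance 100] LieRing.ofAssociativeRing

section General

variable (L : Type) [LieRing L] [LieAlgebra ℂ L]
variable (V : Type) [AddCommGroup V] [Module ℂ V]

/-- `G₁ = Σᵢ π(Xⁱ) ⊗ 1 ⊗ φ(Xᵢ) ∈ End V ⊗ End V ⊗ A`, for a linear map
`φ : g → A` playing the role of the generators `Xᵢ` of `U(g)`. -/
def G1gen (A : Type) [Ring A] [Algebra ℂ A] (π : L →ₗ⁅ℂ⁆ Module.End ℂ V)
    (d : ℕ) (bX : Fin d → L) (Xlo : Fin d → L) (φ : L →ₗ[ℂ] A) :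
    Module.End ℂ V ⊗[ℂ] (Module.End ℂ V ⊗[ℂ] A) :=
  ∑ i : Fin d, π (bX i) ⊗ₜ[ℂ] ((1 : Module.End ℂ V) ⊗ₜ[ℂ] φ (Xlo i))

/-- `G₂ = Σᵢ 1 ⊗ π(Xⁱ) ⊗ φ(Xᵢ) ∈ End V ⊗ End V ⊗ A`. -/
def G2gen (A : Type) [Ring A] [Algebra ℂ A] (π : L →ₗ⁅ℂ⁆ Module.End ℂ V)
    (d : ℕ) (bX : Fin d → L) (Xlo : Fin d → L) (φ : L →ₗ[ℂ] A) :
    Module.End ℂ V ⊗[ℂ] (Module.End ℂ V ⊗[ℂ] A) :=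
  ∑ i : Fin d, (1 : Module.End ℂ V) ⊗ₜ[ℂ] (π (bX i) ⊗ₜ[ℂ] φ (Xlo i))

/-- `Ω = Σᵢ π(Xⁱ) ⊗ π(Xᵢ) ⊗ 1 ∈ End V ⊗ End V ⊗ A`. -/
def OmGen (A : Type) [Ring A] [Algebra ℂ A] (π : L →ₗ⁅ℂ⁆ Module.End ℂ V)
    (d : ℕ) (bX : Fin d → L) (Xlo : Fin d → L) :
    Module.End ℂ V ⊗[ℂ] (Module.End ℂ V ⊗[ℂ] A) :=
  ∑ i : Fin d, π (bX i) ⊗ₜ[ℂ] (π (Xlo i) ⊗ₜ[ℂ] (1 : A))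

/-- The matrix relation `G₁G₂ − G₂G₁ = −ΩG₂ + G₂Ω` for a linear map `φ : g → A`. -/
def MatRel (A : Type) [Ring A] [Algebra ℂ A] (π : L →ₗ⁅ℂ⁆ Module.End ℂ V)
    (d : ℕ) (bX : Fin d → L) (Xlo : Fin d → L) (φ : L →ₗ[ℂ] A) : Prop :=
  G1gen L V A π d bX Xlo φ * G2gen L V A π d bX Xlo φ -
      G2gen L V A π d bX Xlo φ * G1gen L V A π d bX Xlo φ =
    -(OmGen L V A π d bX Xlo * G2gen L V A π d bX Xlo φ) +
      G2gen L V A π d bX Xlo φ * OmGen L V A π d bX Xlo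

/-- The equivalent matrix relation `G₁G₂ − G₂G₁ = ΩG₁ − G₁Ω`. -/
def MatRel' (A : Type) [Ring A] [Algebra ℂ A] (π : L →ₗ⁅ℂ⁆ Module.End ℂ V)
    (d : ℕ) (bX : Fin d → L) (Xlo : Fin d → L) (φ : L →ₗ[ℂ] A) : Prop :=
  G1gen L V A π d bX Xlo φ * G2gen L V A π d bX Xlo φ -
      G2gen L V A π d bX Xlo φ * G1gen L V A π d bX Xlo φ =
    OmGen L V A π d bX Xlo * G1gen L V A π d bX Xlo φ -
      G1gen L V A π d bX Xlo φ * OmGen L V A π d bX Xlo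

end General


section AuxiliaryLemmas

variable {L : Type} [LieRing L] [LieAlgebra ℂ L]
variable {V : Type} [AddCommGroup V] [Module ℂ V]
variable (B : LinearMap.BilinForm ℂ L) {d : ℕ} (bX : Module.Basis (Fin d) ℂ L) (Xlo : Fin d → L)
variable (π : L →ₗ⁅ℂ⁆ Module.End ℂ V)
variable {A : Type} [Ring A] [Algebra ℂ A] (φ : L →ₗ[ℂ] A)

set_option synthInstance.maxHeartbeats 1000000

lemma aux_repr_eq (hdual : ∀ i j, B (bX i) (Xlo j) = if i = j then 1 else 0)
    (X : L) (j : Fin d) : B X (Xlo j) = bX.repr X j := by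
  conv_lhs => rw [← bX.sum_repr X]
  simp [-Module.Basis.sum_repr, map_sum, LinearMap.sum_apply, map_smul, LinearMap.smul_apply, hdual,
    smul_eq_mul, mul_ite, mul_one, mul_zero, Finset.sum_ite_eq']

lemma aux_expand_hi (hdual : ∀ i j, B (bX i) (Xlo j) = if i = j then 1 else 0)
    (X : L) : ∑ k, B X (Xlo k) • bX k = X := by
  simp only [aux_repr_eq B bX Xlo hdual]
  exact bX.sum_repr X

lemma aux_expand_lo (hsym : ∀ X Y : L, B X Y = B Y X) (hnd : B.Nondegenerate)
    (hdual : ∀ i j, B (bX i) (Xlo j) = if i = j then 1 else 0)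
    (X : L) : ∑ k, B (bX k) X • Xlo k = X := by
  set D := X - ∑ k, B (bX k) X • Xlo k with hD
  have hb : ∀ i, B.flip D (bX i) = 0 := by
    intro i
    simp [D, LinearMap.flip_apply, map_sub, map_sum, map_smul, hdual,
      smul_eq_mul, mul_ite, mul_one, mul_zero, Finset.sum_ite_eq]
  have hflip : B.flip D = 0 := bX.ext (fun i => by simpa using hb i)
  have hD0 : D = 0 := hnd.1 D (fun n => by
    rw [hsym]
    simpa using congrArg (fun f => f n) hflip)
  exact (sub_eq_zero.mp hD0).symm

lemma aux_exists_dual_funct {M : Type} [AddCommGroup M] [Module ℂ M] {n : ℕ}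
    {f : Fin n → M} (hf : LinearIndependent ℂ f) (i : Fin n) :
    ∃ ℓ : M →ₗ[ℂ] ℂ, ∀ j, ℓ (f j) = if j = i then 1 else 0 := by
  obtain ⟨g, hg⟩ := LinearMap.exists_extend ((Module.Basis.span hf).coord i)
  refine ⟨g, fun j => ?_⟩
  have h1 : f j = ((Module.Basis.span hf) j : M) := (congrArg Subtype.val (Module.Basis.span_apply hf j)).symm
  calc g (f j) = (g ∘ₗ (Submodule.span ℂ (Set.range f)).subtype) (Module.Basis.span hf j) := by
        rw [h1]; rfl
    _ = (Module.Basis.span hf).coord i (Module.Basis.span hf j) := by rw [hg]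
    _ = _ := by simp [Module.Basis.coord_apply, Module.Basis.repr_self, Finsupp.single_apply]

lemma aux_tensor_extract {M A' : Type} [AddCommGroup M] [Module ℂ M] [AddCommGroup A']
    [Module ℂ A'] {n : ℕ} {f : Fin n → M} (hf : LinearIndependent ℂ f)
    (t : Fin n → Fin n → A')
    (h : ∑ i, ∑ j, f i ⊗ₜ[ℂ] (f j ⊗ₜ[ℂ] t i j) = 0) :
    ∀ i j, t i j = 0 := by
  intro i j
  obtain ⟨ℓi, hi⟩ := aux_exists_dual_funct hf i
  obtain ⟨ℓj, hj⟩ := aux_exists_dual_funct hf j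
  let E1 : M ⊗[ℂ] A' →ₗ[ℂ] A' :=
    (TensorProduct.lid ℂ A').toLinearMap ∘ₗ TensorProduct.map ℓj LinearMap.id
  let E : M ⊗[ℂ] (M ⊗[ℂ] A') →ₗ[ℂ] A' :=
    (TensorProduct.lid ℂ A').toLinearMap ∘ₗ TensorProduct.map ℓi E1
  have h2 := congrArg E h
  simp only [map_zero, map_sum, E, E1, LinearMap.comp_apply, TensorProduct.map_tmul,
    LinearMap.id_apply, LinearEquiv.coe_toLinearMap, TensorProduct.lid_tmul, hi, hj,
    ite_smul, one_smul, zero_smul, smul_ite, smul_zero,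
    Finset.sum_ite_eq', Finset.mem_univ, if_true] at h2
  exact h2

lemma aux_key1 (hsym : ∀ X Y : L, B X Y = B Y X)
    (hinv : ∀ X Y Z : L, B ⁅X, Y⁆ Z = B X ⁅Y, Z⁆) (hnd : B.Nondegenerate)
    (hdual : ∀ i j, B (bX i) (Xlo j) = if i = j then 1 else 0) :
    ∑ i, ∑ j, π (bX i) ⊗ₜ[ℂ] (π ⁅bX j, Xlo i⁆ ⊗ₜ[ℂ] φ (Xlo j))
      = ∑ i, ∑ j, π (bX i) ⊗ₜ[ℂ] (π (bX j) ⊗ₜ[ℂ] φ ⁅Xlo i, Xlo j⁆) := by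
  have e1 : ∀ i j : Fin d, (π ⁅bX j, Xlo i⁆ : Module.End ℂ V)
      = ∑ k, B ⁅bX j, Xlo i⁆ (Xlo k) • π (bX k) := by
    intro i j
    conv_lhs => rw [← aux_expand_hi B bX Xlo hdual ⁅bX j, Xlo i⁆,
      ← LieHom.coe_toLinearMap, map_sum]
    simp
  have e2 : ∀ i j : Fin d, φ ⁅Xlo i, Xlo j⁆
      = ∑ k, B (bX k) ⁅Xlo i, Xlo j⁆ • φ (Xlo k) := by
    intro i j
    conv_lhs => rw [← aux_expand_lo B bX Xlo hsym hnd hdual ⁅Xlo i, Xlo j⁆, map_sum]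
    simp
  calc ∑ i, ∑ j, π (bX i) ⊗ₜ[ℂ] (π ⁅bX j, Xlo i⁆ ⊗ₜ[ℂ] φ (Xlo j))
      = ∑ i, ∑ j, ∑ k, B ⁅bX j, Xlo i⁆ (Xlo k) •
          (π (bX i) ⊗ₜ[ℂ] (π (bX k) ⊗ₜ[ℂ] φ (Xlo j))) := by
        simp only [e1, TensorProduct.sum_tmul, TensorProduct.tmul_sum,
          ← TensorProduct.smul_tmul', TensorProduct.tmul_smul]
    _ = ∑ i, ∑ j, ∑ k, B ⁅bX k, Xlo i⁆ (Xlo j) •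
          (π (bX i) ⊗ₜ[ℂ] (π (bX j) ⊗ₜ[ℂ] φ (Xlo k))) :=
        Finset.sum_congr rfl fun i _ => Finset.sum_comm
    _ = ∑ i, ∑ j, ∑ k, B (bX k) ⁅Xlo i, Xlo j⁆ •
          (π (bX i) ⊗ₜ[ℂ] (π (bX j) ⊗ₜ[ℂ] φ (Xlo k))) := by
        simp only [hinv]
    _ = ∑ i, ∑ j, π (bX i) ⊗ₜ[ℂ] (π (bX j) ⊗ₜ[ℂ] φ ⁅Xlo i, Xlo j⁆) := by
        simp only [e2, TensorProduct.sum_tmul, TensorProduct.tmul_sum,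
          ← TensorProduct.smul_tmul', TensorProduct.tmul_smul]

lemma aux_key2 (hsym : ∀ X Y : L, B X Y = B Y X)
    (hinv : ∀ X Y Z : L, B ⁅X, Y⁆ Z = B X ⁅Y, Z⁆) (hnd : B.Nondegenerate)
    (hdual : ∀ i j, B (bX i) (Xlo j) = if i = j then 1 else 0) (Y : L) (a : A) :
    (∑ i, π ⁅bX i, Y⁆ ⊗ₜ[ℂ] (π (Xlo i) ⊗ₜ[ℂ] a))
      + ∑ i, π (bX i) ⊗ₜ[ℂ] (π ⁅Xlo i, Y⁆ ⊗ₜ[ℂ] a) = 0 := by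
  have e1 : ∀ i : Fin d, (π ⁅bX i, Y⁆ : Module.End ℂ V)
      = ∑ k, B ⁅bX i, Y⁆ (Xlo k) • π (bX k) := by
    intro i
    conv_lhs => rw [← aux_expand_hi B bX Xlo hdual ⁅bX i, Y⁆,
      ← LieHom.coe_toLinearMap, map_sum]
    simp
  have e2 : ∀ i : Fin d, (π ⁅Xlo i, Y⁆ : Module.End ℂ V)
      = ∑ k, B (bX k) ⁅Xlo i, Y⁆ • π (Xlo k) := by
    intro i
    conv_lhs => rw [← aux_expand_lo B bX Xlo hsym hnd hdual ⁅Xlo i, Y⁆,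
      ← LieHom.coe_toLinearMap, map_sum]
    simp
  have c1 : (∑ i, π ⁅bX i, Y⁆ ⊗ₜ[ℂ] ((π (Xlo i) : Module.End ℂ V) ⊗ₜ[ℂ] a))
      = ∑ i, ∑ k, B ⁅bX k, Y⁆ (Xlo i) •
          (π (bX i) ⊗ₜ[ℂ] (π (Xlo k) ⊗ₜ[ℂ] a)) := by
    calc (∑ i, π ⁅bX i, Y⁆ ⊗ₜ[ℂ] ((π (Xlo i) : Module.End ℂ V) ⊗ₜ[ℂ] a))
        = ∑ i, ∑ k, B ⁅bX i, Y⁆ (Xlo k) •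
            (π (bX k) ⊗ₜ[ℂ] (π (Xlo i) ⊗ₜ[ℂ] a)) := by
          simp only [e1, TensorProduct.sum_tmul, ← TensorProduct.smul_tmul']
      _ = _ := Finset.sum_comm
  have c2 : (∑ i, π (bX i) ⊗ₜ[ℂ] ((π ⁅Xlo i, Y⁆ : Module.End ℂ V) ⊗ₜ[ℂ] a))
      = ∑ i, ∑ k, B (bX k) ⁅Xlo i, Y⁆ •
          (π (bX i) ⊗ₜ[ℂ] (π (Xlo k) ⊗ₜ[ℂ] a)) := by
    simp only [e2, TensorProduct.sum_tmul, TensorProduct.tmul_sum,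
      ← TensorProduct.smul_tmul', TensorProduct.tmul_smul]
  rw [c1, c2, ← Finset.sum_add_distrib]
  refine Finset.sum_eq_zero fun i _ => ?_
  rw [← Finset.sum_add_distrib]
  refine Finset.sum_eq_zero fun k _ => ?_
  rw [← add_smul]
  have h1 : B ⁅bX k, Y⁆ (Xlo i) = B (bX k) ⁅Y, Xlo i⁆ := hinv _ _ _
  have h2 : (⁅Y, Xlo i⁆ : L) + ⁅Xlo i, Y⁆ = 0 := by
    rw [← lie_skew Y (Xlo i)]; exact neg_add_cancel _
  rw [h1, ← map_add, h2, map_zero, zero_smul]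

lemma aux_sum_mul_sum {n m : ℕ} (f : Fin n → Module.End ℂ V ⊗[ℂ] (Module.End ℂ V ⊗[ℂ] A))
    (g : Fin m → Module.End ℂ V ⊗[ℂ] (Module.End ℂ V ⊗[ℂ] A)) :
    (∑ i, f i) * (∑ j, g j) = ∑ i, ∑ j, f i * g j :=
  (Finset.sum_mul Finset.univ f _).trans
    (Finset.sum_congr rfl fun i _ => Finset.mul_sum Finset.univ g (f i))

lemma aux_mul_G1G2 : G1gen L V A π d bX Xlo φ * G2gen L V A π d bX Xlo φ
    = ∑ i, ∑ j, π (bX i) ⊗ₜ[ℂ] (π (bX j) ⊗ₜ[ℂ] (φ (Xlo i) * φ (Xlo j))) := by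
  rw [G1gen, G2gen, aux_sum_mul_sum]
  simp only [Algebra.TensorProduct.tmul_mul_tmul, one_mul, mul_one]

lemma aux_mul_G2G1 : G2gen L V A π d bX Xlo φ * G1gen L V A π d bX Xlo φ
    = ∑ i, ∑ j, π (bX i) ⊗ₜ[ℂ] (π (bX j) ⊗ₜ[ℂ] (φ (Xlo j) * φ (Xlo i))) := by
  rw [G2gen, G1gen, aux_sum_mul_sum]
  simp only [Algebra.TensorProduct.tmul_mul_tmul, one_mul, mul_one]
  exact Finset.sum_comm

lemma aux_mul_OmG2 : OmGen L V A π d bX Xlo * G2gen L V A π d bX Xlo φ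
    = ∑ i, ∑ j, π (bX i) ⊗ₜ[ℂ] ((π (Xlo i) * π (bX j)) ⊗ₜ[ℂ] φ (Xlo j)) := by
  rw [OmGen, G2gen, aux_sum_mul_sum]
  simp only [Algebra.TensorProduct.tmul_mul_tmul, one_mul, mul_one]

lemma aux_mul_G2Om : G2gen L V A π d bX Xlo φ * OmGen L V A π d bX Xlo
    = ∑ i, ∑ j, π (bX i) ⊗ₜ[ℂ] ((π (bX j) * π (Xlo i)) ⊗ₜ[ℂ] φ (Xlo j)) := by
  rw [G2gen, OmGen, aux_sum_mul_sum]
  simp only [Algebra.TensorProduct.tmul_mul_tmul, one_mul, mul_one]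
  exact Finset.sum_comm

lemma aux_mul_OmG1 : OmGen L V A π d bX Xlo * G1gen L V A π d bX Xlo φ
    = ∑ i, ∑ j, (π (bX i) * π (bX j)) ⊗ₜ[ℂ] (π (Xlo i) ⊗ₜ[ℂ] φ (Xlo j)) := by
  rw [OmGen, G1gen, aux_sum_mul_sum]
  simp only [Algebra.TensorProduct.tmul_mul_tmul, one_mul, mul_one]

lemma aux_mul_G1Om : G1gen L V A π d bX Xlo φ * OmGen L V A π d bX Xlo
    = ∑ i, ∑ j, (π (bX j) * π (bX i)) ⊗ₜ[ℂ] (π (Xlo i) ⊗ₜ[ℂ] φ (Xlo j)) := by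
  rw [G1gen, OmGen, aux_sum_mul_sum]
  simp only [Algebra.TensorProduct.tmul_mul_tmul, one_mul, mul_one]
  exact Finset.sum_comm

lemma aux_pi_lie (x y : L) : (π ⁅x, y⁆ : Module.End ℂ V) = π x * π y - π y * π x := by
  rw [LieHom.map_lie]; rfl

lemma aux_dsum_sub {α : Type} [AddCommGroup α] {n : ℕ} (F G : Fin n → Fin n → α) :
    ((∑ i, ∑ j, F i j) - ∑ i, ∑ j, G i j) = ∑ i, ∑ j, (F i j - G i j) := by
  rw [← Finset.sum_sub_distrib]
  exact Finset.sum_congr rfl fun i _ => (Finset.sum_sub_distrib _ _).symm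

lemma aux_neg_sum_neg {α : Type} [AddCommGroup α] {n : ℕ} (F : Fin n → α) :
    (-∑ i, -F i) = ∑ i, F i := by simp

lemma aux_matRel_iff (hsym : ∀ X Y : L, B X Y = B Y X)
    (hinv : ∀ X Y Z : L, B ⁅X, Y⁆ Z = B X ⁅Y, Z⁆) (hnd : B.Nondegenerate)
    (hdual : ∀ i j, B (bX i) (Xlo j) = if i = j then 1 else 0) :
    MatRel L V A π d bX Xlo φ ↔
      ∑ i, ∑ j, π (bX i) ⊗ₜ[ℂ] (π (bX j) ⊗ₜ[ℂ]
          (φ (Xlo i) * φ (Xlo j) - φ (Xlo j) * φ (Xlo i))) =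
        ∑ i, ∑ j, π (bX i) ⊗ₜ[ℂ] (π (bX j) ⊗ₜ[ℂ] φ ⁅Xlo i, Xlo j⁆) := by
  unfold MatRel
  rw [aux_mul_G1G2, aux_mul_G2G1, aux_mul_OmG2, aux_mul_G2Om]
  have hL : ((∑ i, ∑ j, π (bX i) ⊗ₜ[ℂ] (π (bX j) ⊗ₜ[ℂ] (φ (Xlo i) * φ (Xlo j))))
      - ∑ i, ∑ j, π (bX i) ⊗ₜ[ℂ] (π (bX j) ⊗ₜ[ℂ] (φ (Xlo j) * φ (Xlo i))))
      = ∑ i, ∑ j, π (bX i) ⊗ₜ[ℂ] (π (bX j) ⊗ₜ[ℂ]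
          (φ (Xlo i) * φ (Xlo j) - φ (Xlo j) * φ (Xlo i))) :=
    (aux_dsum_sub (α := Module.End ℂ V ⊗[ℂ] (Module.End ℂ V ⊗[ℂ] A)) _ _).trans
      (Finset.sum_congr rfl fun i _ => Finset.sum_congr rfl fun j _ => by
        simp only [TensorProduct.tmul_sub])
  have hR : (-(∑ i, ∑ j, π (bX i) ⊗ₜ[ℂ] ((π (Xlo i) * π (bX j)) ⊗ₜ[ℂ] φ (Xlo j)))
      + ∑ i, ∑ j, π (bX i) ⊗ₜ[ℂ] ((π (bX j) * π (Xlo i)) ⊗ₜ[ℂ] φ (Xlo j)))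
      = ∑ i, ∑ j, π (bX i) ⊗ₜ[ℂ] (π (bX j) ⊗ₜ[ℂ] φ ⁅Xlo i, Xlo j⁆) :=
    calc (-(∑ i, ∑ j, π (bX i) ⊗ₜ[ℂ] ((π (Xlo i) * π (bX j)) ⊗ₜ[ℂ] φ (Xlo j)))
        + ∑ i, ∑ j, π (bX i) ⊗ₜ[ℂ] ((π (bX j) * π (Xlo i)) ⊗ₜ[ℂ] φ (Xlo j)))
        = ((∑ i, ∑ j, π (bX i) ⊗ₜ[ℂ] ((π (bX j) * π (Xlo i)) ⊗ₜ[ℂ] φ (Xlo j)))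
          - ∑ i, ∑ j, π (bX i) ⊗ₜ[ℂ] ((π (Xlo i) * π (bX j)) ⊗ₜ[ℂ] φ (Xlo j))) :=
          neg_add_eq_sub (α := Module.End ℂ V ⊗[ℂ] (Module.End ℂ V ⊗[ℂ] A)) _ _
      _ = ∑ i, ∑ j, π (bX i) ⊗ₜ[ℂ] (π ⁅bX j, Xlo i⁆ ⊗ₜ[ℂ] φ (Xlo j)) :=
          (aux_dsum_sub (α := Module.End ℂ V ⊗[ℂ] (Module.End ℂ V ⊗[ℂ] A)) _ _).trans
            (Finset.sum_congr rfl fun i _ => Finset.sum_congr rfl fun j _ => by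
              rw [aux_pi_lie]
              simp only [TensorProduct.sub_tmul, TensorProduct.tmul_sub])
      _ = _ := aux_key1 B bX Xlo π φ hsym hinv hnd hdual
  constructor
  · intro h; exact (hL.symm.trans h).trans hR
  · intro h; exact (hL.trans h).trans hR.symm

lemma aux_matRel'_iff (hsym : ∀ X Y : L, B X Y = B Y X)
    (hinv : ∀ X Y Z : L, B ⁅X, Y⁆ Z = B X ⁅Y, Z⁆) (hnd : B.Nondegenerate)
    (hdual : ∀ i j, B (bX i) (Xlo j) = if i = j then 1 else 0) :
    MatRel' L V A π d bX Xlo φ ↔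
      ∑ i, ∑ j, π (bX i) ⊗ₜ[ℂ] (π (bX j) ⊗ₜ[ℂ]
          (φ (Xlo i) * φ (Xlo j) - φ (Xlo j) * φ (Xlo i))) =
        ∑ i, ∑ j, π (bX i) ⊗ₜ[ℂ] (π (bX j) ⊗ₜ[ℂ] φ ⁅Xlo i, Xlo j⁆) := by
  unfold MatRel'
  rw [aux_mul_G1G2, aux_mul_G2G1, aux_mul_OmG1, aux_mul_G1Om]
  have hL : ((∑ i, ∑ j, π (bX i) ⊗ₜ[ℂ] (π (bX j) ⊗ₜ[ℂ] (φ (Xlo i) * φ (Xlo j))))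
      - ∑ i, ∑ j, π (bX i) ⊗ₜ[ℂ] (π (bX j) ⊗ₜ[ℂ] (φ (Xlo j) * φ (Xlo i))))
      = ∑ i, ∑ j, π (bX i) ⊗ₜ[ℂ] (π (bX j) ⊗ₜ[ℂ]
          (φ (Xlo i) * φ (Xlo j) - φ (Xlo j) * φ (Xlo i))) :=
    (aux_dsum_sub (α := Module.End ℂ V ⊗[ℂ] (Module.End ℂ V ⊗[ℂ] A)) _ _).trans
      (Finset.sum_congr rfl fun i _ => Finset.sum_congr rfl fun j _ => by
        simp only [TensorProduct.tmul_sub])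
  have step2 : ∀ j : Fin d, (∑ i, π ⁅bX i, bX j⁆ ⊗ₜ[ℂ] (π (Xlo i) ⊗ₜ[ℂ] φ (Xlo j)))
      = ∑ i, π (bX i) ⊗ₜ[ℂ] (π ⁅bX j, Xlo i⁆ ⊗ₜ[ℂ] φ (Xlo j)) := by
    intro j
    have h0 := aux_key2 B bX Xlo π hsym hinv hnd hdual (bX j) (φ (Xlo j))
    have h1 : (∑ i, π ⁅bX i, bX j⁆ ⊗ₜ[ℂ] ((π (Xlo i) : Module.End ℂ V) ⊗ₜ[ℂ] φ (Xlo j)))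
        = -∑ i, π (bX i) ⊗ₜ[ℂ] ((π ⁅Xlo i, bX j⁆ : Module.End ℂ V) ⊗ₜ[ℂ] φ (Xlo j)) :=
      eq_neg_of_add_eq_zero_left h0
    have h2 : ∀ i : Fin d, π (bX i) ⊗ₜ[ℂ] ((π ⁅Xlo i, bX j⁆ : Module.End ℂ V) ⊗ₜ[ℂ] φ (Xlo j))
        = -(π (bX i) ⊗ₜ[ℂ] ((π ⁅bX j, Xlo i⁆ : Module.End ℂ V) ⊗ₜ[ℂ] φ (Xlo j))) := by
      intro i
      have hneg : (π ⁅Xlo i, bX j⁆ : Module.End ℂ V) = -π ⁅bX j, Xlo i⁆ := by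
        rw [aux_pi_lie, aux_pi_lie]; exact (neg_sub _ _).symm
      rw [hneg]
      simp only [TensorProduct.neg_tmul, TensorProduct.tmul_neg]
    calc (∑ i, π ⁅bX i, bX j⁆ ⊗ₜ[ℂ] ((π (Xlo i) : Module.End ℂ V) ⊗ₜ[ℂ] φ (Xlo j)))
        = -∑ i, -(π (bX i) ⊗ₜ[ℂ] ((π ⁅bX j, Xlo i⁆ : Module.End ℂ V) ⊗ₜ[ℂ] φ (Xlo j))) :=
          h1.trans (congrArg Neg.neg (Finset.sum_congr rfl fun i _ => h2 i))
      _ = _ := aux_neg_sum_neg (α := Module.End ℂ V ⊗[ℂ] (Module.End ℂ V ⊗[ℂ] A)) _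
  have hR : ((∑ i, ∑ j, (π (bX i) * π (bX j)) ⊗ₜ[ℂ] (π (Xlo i) ⊗ₜ[ℂ] φ (Xlo j)))
      - ∑ i, ∑ j, (π (bX j) * π (bX i)) ⊗ₜ[ℂ] (π (Xlo i) ⊗ₜ[ℂ] φ (Xlo j)))
      = ∑ i, ∑ j, π (bX i) ⊗ₜ[ℂ] (π (bX j) ⊗ₜ[ℂ] φ ⁅Xlo i, Xlo j⁆) :=
    calc ((∑ i, ∑ j, (π (bX i) * π (bX j)) ⊗ₜ[ℂ] (π (Xlo i) ⊗ₜ[ℂ] φ (Xlo j)))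
        - ∑ i, ∑ j, (π (bX j) * π (bX i)) ⊗ₜ[ℂ] (π (Xlo i) ⊗ₜ[ℂ] φ (Xlo j)))
        = ∑ i, ∑ j, π ⁅bX i, bX j⁆ ⊗ₜ[ℂ] (π (Xlo i) ⊗ₜ[ℂ] φ (Xlo j)) :=
          (aux_dsum_sub (α := Module.End ℂ V ⊗[ℂ] (Module.End ℂ V ⊗[ℂ] A)) _ _).trans
            (Finset.sum_congr rfl fun i _ => Finset.sum_congr rfl fun j _ => by
              rw [aux_pi_lie]
              simp only [TensorProduct.sub_tmul])
      _ = ∑ j, ∑ i, π ⁅bX i, bX j⁆ ⊗ₜ[ℂ] (π (Xlo i) ⊗ₜ[ℂ] φ (Xlo j)) := Finset.sum_comm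
      _ = ∑ j, ∑ i, π (bX i) ⊗ₜ[ℂ] (π ⁅bX j, Xlo i⁆ ⊗ₜ[ℂ] φ (Xlo j)) :=
          Finset.sum_congr rfl fun j _ => step2 j
      _ = ∑ i, ∑ j, π (bX i) ⊗ₜ[ℂ] (π ⁅bX j, Xlo i⁆ ⊗ₜ[ℂ] φ (Xlo j)) := Finset.sum_comm
      _ = _ := aux_key1 B bX Xlo π φ hsym hinv hnd hdual
  constructor
  · intro h; exact (hL.symm.trans h).trans hR
  · intro h; exact (hL.trans h).trans hR.symm

end AuxiliaryLemmas

/-- for a finite-dimensional complex Lie algebra `g` with a nondegenerate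
symmetric invariant bilinear form, dual bases `X¹,…,X^d` and `X₁,…,X_d`, and a
finite-dimensional representation `π : g → End V`, the identities
`G₁G₂ − G₂G₁ = −ΩG₂ + G₂Ω = ΩG₁ − G₁Ω` hold in `End V ⊗ End V ⊗ U(g)` (with `φ = ι`
the canonical embedding); moreover if `π` is faithful then, for an arbitrary complex
algebra `A` and linear map `φ : g → A`, the matrix relation holds iff `φ` respects the
defining commutation relations `[Xᵢ,Xⱼ] = Σₖ c_{ij}^k Xₖ` of `U(g)`. -/
theorem matrix_presentation_of_U
    (L : Type) [LieRing L] [LieAlgebra ℂ L] [Module.Finite ℂ L]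
    (V : Type) [AddCommGroup V] [Module ℂ V] [Module.Finite ℂ V]
    (B : LinearMap.BilinForm ℂ L)
    (hsym : ∀ X Y : L, B X Y = B Y X)
    (hinv : ∀ X Y Z : L, B ⁅X, Y⁆ Z = B X ⁅Y, Z⁆)
    (hnd : B.Nondegenerate)
    (d : ℕ) (bX : Module.Basis (Fin d) ℂ L) (Xlo : Fin d → L)
    (hdual : ∀ i j, B (bX i) (Xlo j) = if i = j then 1 else 0)
    (π : L →ₗ⁅ℂ⁆ Module.End ℂ V) :
    MatRel L V (UniversalEnvelopingAlgebra ℂ L) π d bX Xlo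
        (UniversalEnvelopingAlgebra.ι ℂ).toLinearMap ∧
    MatRel' L V (UniversalEnvelopingAlgebra ℂ L) π d bX Xlo
        (UniversalEnvelopingAlgebra.ι ℂ).toLinearMap ∧
    (Function.Injective π →
      ∀ (A : Type) [Ring A] [Algebra ℂ A] (φ : L →ₗ[ℂ] A),
        MatRel L V A π d bX Xlo φ ↔
          ∀ X Y : L, φ ⁅X, Y⁆ = φ X * φ Y - φ Y * φ X) := by
  classical
  have hcomm : ∀ X Y : L,
      (UniversalEnvelopingAlgebra.ι ℂ).toLinearMap ⁅X, Y⁆ =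
        (UniversalEnvelopingAlgebra.ι ℂ).toLinearMap X *
          (UniversalEnvelopingAlgebra.ι ℂ).toLinearMap Y -
        (UniversalEnvelopingAlgebra.ι ℂ).toLinearMap Y *
          (UniversalEnvelopingAlgebra.ι ℂ).toLinearMap X := by
    intro X Y
    simp only [LieHom.coe_toLinearMap]
    rw [LieHom.map_lie]
    exact Ring.lie_def _ _
  have hCE : ∀ (A : Type) [Ring A] [Algebra ℂ A], ∀ (φ : L →ₗ[ℂ] A),
      (∀ X Y : L, φ ⁅X, Y⁆ = φ X * φ Y - φ Y * φ X) →
      ∑ i, ∑ j, π (bX i) ⊗ₜ[ℂ] (π (bX j) ⊗ₜ[ℂ]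
          (φ (Xlo i) * φ (Xlo j) - φ (Xlo j) * φ (Xlo i))) =
        ∑ i, ∑ j, π (bX i) ⊗ₜ[ℂ] (π (bX j) ⊗ₜ[ℂ] φ ⁅Xlo i, Xlo j⁆) := by
    intro A _ _ φ h
    exact Finset.sum_congr rfl fun i _ => Finset.sum_congr rfl fun j _ => by rw [h]
  refine ⟨?_, ?_, ?_⟩
  · exact (aux_matRel_iff B bX Xlo π _ hsym hinv hnd hdual).mpr
      (hCE _ _ hcomm)
  · exact (aux_matRel'_iff B bX Xlo π _ hsym hinv hnd hdual).mpr
      (hCE _ _ hcomm)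
  · intro hinj A _ _ φ
    constructor
    · intro hmat
      have heq := (aux_matRel_iff B bX Xlo π φ hsym hinv hnd hdual).mp hmat
      -- extract termwise relations
      have hf : LinearIndependent ℂ (fun i => (π (bX i) : Module.End ℂ V)) := by
        have hker : LinearMap.ker π.toLinearMap = ⊥ :=
          LinearMap.ker_eq_bot.mpr hinj
        exact bX.linearIndependent.map' π.toLinearMap hker
      have hzero : ∑ i, ∑ j, (π (bX i) : Module.End ℂ V) ⊗ₜ[ℂ] (π (bX j) ⊗ₜ[ℂ]
          ((φ (Xlo i) * φ (Xlo j) - φ (Xlo j) * φ (Xlo i)) - φ ⁅Xlo i, Xlo j⁆)) = 0 := by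
        have expand : ∑ i, ∑ j, (π (bX i) : Module.End ℂ V) ⊗ₜ[ℂ] (π (bX j) ⊗ₜ[ℂ]
            ((φ (Xlo i) * φ (Xlo j) - φ (Xlo j) * φ (Xlo i)) - φ ⁅Xlo i, Xlo j⁆))
            = (∑ i, ∑ j, π (bX i) ⊗ₜ[ℂ] (π (bX j) ⊗ₜ[ℂ]
                (φ (Xlo i) * φ (Xlo j) - φ (Xlo j) * φ (Xlo i))))
              - ∑ i, ∑ j, π (bX i) ⊗ₜ[ℂ] (π (bX j) ⊗ₜ[ℂ] φ ⁅Xlo i, Xlo j⁆) :=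
          ((aux_dsum_sub (α := Module.End ℂ V ⊗[ℂ] (Module.End ℂ V ⊗[ℂ] A)) _ _).trans
            (Finset.sum_congr rfl fun i _ => Finset.sum_congr rfl fun j _ => by
              simp only [TensorProduct.tmul_sub])).symm
        rw [expand, heq, sub_self]
      have hterm := aux_tensor_extract hf _ hzero
      have hpair : ∀ i j, φ ⁅Xlo i, Xlo j⁆ =
          φ (Xlo i) * φ (Xlo j) - φ (Xlo j) * φ (Xlo i) :=
        fun i j => (sub_eq_zero.mp (hterm i j)).symm
      -- extend bilinearly using that `Xlo` spans `L`
      have hspan : ∀ X : L, ∑ k, B (bX k) X • Xlo k = X :=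
        aux_expand_lo B bX Xlo hsym hnd hdual
      have hXli : LinearIndependent ℂ Xlo := by
        rw [Fintype.linearIndependent_iff]
        intro g hg i
        have h3 := congrArg (B (bX i)) hg
        simpa [map_sum, map_smul, hdual, smul_eq_mul, mul_ite, mul_one, mul_zero,
          Finset.sum_ite_eq] using h3
      have hXsp : ⊤ ≤ Submodule.span ℂ (Set.range Xlo) := by
        intro X _
        rw [← hspan X]
        exact Submodule.sum_mem _ fun k _ =>
          Submodule.smul_mem _ _ (Submodule.subset_span ⟨k, rfl⟩)
      let bL : Module.Basis (Fin d) ℂ L := Module.Basis.mk hXli hXsp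
      have hbL : ∀ i, bL i = Xlo i := fun i => Module.Basis.mk_apply hXli hXsp i
      let P : L →ₗ[ℂ] L →ₗ[ℂ] A := LinearMap.mk₂ ℂ (fun X Y => φ ⁅X, Y⁆)
        (fun m₁ m₂ n => by simp only [add_lie, map_add])
        (fun c m n => by simp only [smul_lie, map_smul])
        (fun m n₁ n₂ => by simp only [lie_add, map_add])
        (fun c m n => by simp only [lie_smul, map_smul])
      let Q : L →ₗ[ℂ] L →ₗ[ℂ] A := LinearMap.mk₂ ℂ
        (fun X Y => φ X * φ Y - φ Y * φ X)
        (fun m₁ m₂ n => by simp only [map_add, add_mul, mul_add]; abel)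
        (fun c m n => by
          simp only [map_smul, smul_mul_assoc, mul_smul_comm, smul_sub])
        (fun m n₁ n₂ => by simp only [map_add, mul_add, add_mul]; abel)
        (fun c m n => by
          simp only [map_smul, smul_mul_assoc, mul_smul_comm, smul_sub])
      have hPQ : P = Q := bL.ext fun i => bL.ext fun j => by
        simp only [hbL, P, Q, LinearMap.mk₂_apply]
        exact hpair i j
      intro X Y
      exact LinearMap.congr_fun (LinearMap.congr_fun hPQ X) Y
    · intro h
      exact (aux_matRel_iff B bX Xlo π φ hsym hinv hnd hdual).mpr (hCE _ _ h)
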